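/- Normalization theorem for Call-by-Value: the unbiased strategy ⊳ is a normalizing strategy for →βv. That is: (a) a term is ⊳-normal if and only if it is βv-normal; and (b) if M →βv* N for some βv-normal N, then every maximal ⊳-sequence from M is finite and ends in a βv-normal form (indeed, by Random Descent, it ends in N). -/

import Mathlib

/-- Untyped λ-terms in de Bruijn representation. -/
inductive Tm : Type
  | var : ℕ → Tm
  | lam : Tm → Tm
  | app : Tm → Tm → Tm
deriving DecidableEq

namespace Tm

/-- Lift (shift by one) the free variables of index `≥ d`. -/
def lift (d : ℕ) : Tm → Tm
  | var n => if n < d then var n else var (n + 1)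
  | lam M => lam (lift (d + 1) M)
  | app M N => app (lift d M) (lift d N)

/-- Capture-avoiding substitution `M[N/k]` of `N` for the free variable `k` in `M`. -/
def subst : Tm → ℕ → Tm → Tm
  | var n, k, N => if n = k then N else if k < n then var (n - 1) else var n
  | lam M, k, N => lam (subst M (k + 1) (lift 0 N))
  | app M₁ M₂, k, N => app (subst M₁ k N) (subst M₂ k N)

end Tm

/-- Values: variables and abstractions. -/
inductive IsValue : Tm → Prop
  | var (n : ℕ) : IsValue (Tm.var n)
  | lam (M : Tm) : IsValue (Tm.lam M)

/-- βv-reduction: the closure of the root rule `(λx.M)V ↦βv M[V/x]` (for `V` a value)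
under arbitrary contexts. -/
inductive Betav : Tm → Tm → Prop
  | beta {M V} : IsValue V → Betav (Tm.app (Tm.lam M) V) (M.subst 0 V)
  | lam {M M'} : Betav M M' → Betav (Tm.lam M) (Tm.lam M')
  | appL {M M' N} : Betav M M' → Betav (Tm.app M N) (Tm.app M' N)
  | appR {M N N'} : Betav N N' → Betav (Tm.app M N) (Tm.app M N')

/-- Weak reduction: the closure of `↦βv` under weak contexts `W ::= ⟨⟩ | W M | M W`. -/
inductive Weakv : Tm → Tm → Prop
  | beta {M V} : IsValue V → Weakv (Tm.app (Tm.lam M) V) (M.subst 0 V)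
  | appL {M M' N} : Weakv M M' → Weakv (Tm.app M N) (Tm.app M' N)
  | appR {M N N'} : Weakv N N' → Weakv (Tm.app M N) (Tm.app M N')

/-- The unbiased strategy `⊳`: perform weak steps as long as possible; once the term has
no weak redex, iterate in the subterms (in arbitrary order). -/
inductive UnbV : Tm → Tm → Prop
  | weak {M M'} : Weakv M M' → UnbV M M'
  | lam {P P'} : (∀ s, ¬ Weakv (Tm.lam P) s) → UnbV P P' → UnbV (Tm.lam P) (Tm.lam P')
  | appL {P P' Q} : (∀ s, ¬ Weakv (Tm.app P Q) s) → UnbV P P' →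
      UnbV (Tm.app P Q) (Tm.app P' Q)
  | appR {P Q Q'} : (∀ s, ¬ Weakv (Tm.app P Q) s) → UnbV Q Q' →
      UnbV (Tm.app P Q) (Tm.app P Q')

/-- `M` is `r`-normal: it has no `r`-successor. -/
def NormalElt (r : Tm → Tm → Prop) (M : Tm) : Prop := ∀ N, ¬ r M N

/-- A maximal `r`-sequence from `M`, encoded as a stream that stabilizes on a normal
form in the finite case. -/
def MaxSeq (r : Tm → Tm → Prop) (M : Tm) (f : ℕ → Tm) : Prop :=
  f 0 = M ∧ ∀ n, r (f n) (f (n + 1)) ∨ (NormalElt r (f n) ∧ f (n + 1) = f n)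

namespace Tm

def upRen (r : ℕ → ℕ) : ℕ → ℕ
  | 0 => 0
  | n+1 => r n + 1

def rename (r : ℕ → ℕ) : Tm → Tm
  | var n => var (r n)
  | lam M => lam (rename (upRen r) M)
  | app M N => app (rename r M) (rename r N)

def upSub (σ : ℕ → Tm) : ℕ → Tm
  | 0 => var 0
  | n+1 => rename Nat.succ (σ n)

def applySub (σ : ℕ → Tm) : Tm → Tm
  | var n => σ n
  | lam M => lam (applySub (upSub σ) M)
  | app M N => app (applySub σ M) (applySub σ N)

def consSub (W : Tm) (σ : ℕ → Tm) : ℕ → Tm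
  | 0 => W
  | n+1 => σ n

theorem rename_ext {r r' : ℕ → ℕ} (h : ∀ n, r n = r' n) (M : Tm) :
    rename r M = rename r' M := by
  induction M generalizing r r' with
  | var n => simp [rename, h]
  | lam M ih =>
      simp only [rename, lam.injEq]
      exact ih (fun n => by cases n <;> simp [upRen, h])
  | app M N ihM ihN => simp [rename, ihM h, ihN h]

theorem applySub_ext {σ σ' : ℕ → Tm} (h : ∀ n, σ n = σ' n) (M : Tm) :
    applySub σ M = applySub σ' M := by
  induction M generalizing σ σ' with
  | var n => simp [applySub, h]
  | lam M ih =>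
      simp only [applySub, lam.injEq]
      exact ih (fun n => by cases n <;> simp [upSub, h])
  | app M N ihM ihN => simp [applySub, ihM h, ihN h]

theorem rename_rename (r s : ℕ → ℕ) (M : Tm) :
    rename r (rename s M) = rename (fun n => r (s n)) M := by
  induction M generalizing r s with
  | var n => simp [rename]
  | lam M ih =>
      simp only [rename, lam.injEq]
      rw [ih]
      exact rename_ext (fun n => by cases n <;> simp [upRen]) M
  | app M N ihM ihN => simp [rename, ihM, ihN]

theorem applySub_rename (σ : ℕ → Tm) (r : ℕ → ℕ) (M : Tm) :
    applySub σ (rename r M) = applySub (fun n => σ (r n)) M := by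
  induction M generalizing σ r with
  | var n => simp [applySub, rename]
  | lam M ih =>
      simp only [rename, applySub, lam.injEq]
      rw [ih]
      exact applySub_ext (fun n => by cases n <;> simp [upSub, upRen]) M
  | app M N ihM ihN => simp [rename, applySub, ihM, ihN]

theorem rename_applySub (r : ℕ → ℕ) (σ : ℕ → Tm) (M : Tm) :
    rename r (applySub σ M) = applySub (fun n => rename r (σ n)) M := by
  induction M generalizing σ r with
  | var n => simp [applySub, rename]
  | lam M ih =>
      simp only [rename, applySub, lam.injEq]
      rw [ih]
      refine applySub_ext (fun n => ?_) M
      cases n with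
      | zero => simp [upSub, rename, upRen]
      | succ n =>
          simp only [upSub, rename_rename]
          exact rename_ext (fun m => by simp [upRen]) _
  | app M N ihM ihN => simp [rename, applySub, ihM, ihN]

theorem applySub_applySub (τ σ : ℕ → Tm) (M : Tm) :
    applySub τ (applySub σ M) = applySub (fun n => applySub τ (σ n)) M := by
  induction M generalizing σ τ with
  | var n => simp [applySub]
  | lam M ih =>
      simp only [applySub, lam.injEq]
      rw [ih]
      refine applySub_ext (fun n => ?_) M
      cases n with
      | zero => simp [upSub, applySub]
      | succ n =>
          simp only [upSub, applySub_rename, rename_applySub]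
  | app M N ihM ihN => simp [applySub, ihM, ihN]

def liftRen (d : ℕ) : ℕ → ℕ := fun n => if n < d then n else n + 1

theorem lift_eq_rename (d : ℕ) (M : Tm) : lift d M = rename (liftRen d) M := by
  induction M generalizing d with
  | var n => simp only [lift, rename, liftRen]; split <;> rfl
  | lam M ih =>
      simp only [lift, rename, lam.injEq]
      rw [ih]
      refine rename_ext (fun n => ?_) M
      cases n with
      | zero => simp [upRen, liftRen]
      | succ n =>
          simp only [upRen, liftRen, Nat.succ_lt_succ_iff]
          split <;> rfl
  | app M N ihM ihN => simp [lift, rename, ihM, ihN]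

def sSub (k : ℕ) (N : Tm) : ℕ → Tm := fun n =>
  if n = k then N else if k < n then var (n - 1) else var n

theorem subst_eq_applySub (M : Tm) (k : ℕ) (N : Tm) :
    M.subst k N = applySub (sSub k N) M := by
  induction M generalizing k N with
  | var n => simp [subst, applySub, sSub]
  | lam M ih =>
      simp only [subst, applySub, lam.injEq]
      rw [ih]
      refine applySub_ext (fun n => ?_) M
      cases n with
      | zero => simp [upSub, sSub]
      | succ n =>
          simp only [upSub, sSub]
          rcases Nat.lt_trichotomy n k with h | h | h
          · have h1 : ¬ n = k := by omega
            have h2 : ¬ k < n := by omega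
            have h3 : ¬ (n+1) = (k+1) := by omega
            have h4 : ¬ (k+1) < (n+1) := by omega
            simp [h1, h2, h3, h4, rename]
          · subst h
            simp only [if_pos rfl, lift_eq_rename]
            exact rename_ext (fun m => by simp [liftRen]) N
          · have h1 : ¬ n = k := by omega
            have h3 : ¬ (n+1) = (k+1) := by omega
            have h4 : (k+1) < (n+1) := by omega
            simp only [h1, if_false, if_pos h, if_neg h3, if_pos h4, rename]
            congr 1
            omega
  | app M N ihM ihN => simp [subst, applySub, ihM, ihN]

theorem applySub_var (M : Tm) : applySub var M = M := by
  induction M with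
  | var n => simp [applySub]
  | lam M ih =>
      simp only [applySub, lam.injEq]
      rw [applySub_ext (σ' := var) (fun n => by cases n <;> simp [upSub, rename]) M, ih]
  | app M N ihM ihN => simp [applySub, ihM, ihN]

theorem subst0_eq (A B : Tm) : A.subst 0 B = applySub (consSub B var) A := by
  rw [subst_eq_applySub]
  refine applySub_ext (fun n => ?_) A
  cases n <;> simp [sSub, consSub]

/-- renaming commutes with subst-at-0 -/
theorem rename_subst0 (r : ℕ → ℕ) (A B : Tm) :
    rename r (A.subst 0 B) = (rename (upRen r) A).subst 0 (rename r B) := by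
  rw [subst0_eq, subst0_eq, rename_applySub, applySub_rename]
  refine applySub_ext (fun n => ?_) A
  cases n <;> simp [consSub, upRen, rename]

theorem subst0_up (σ : ℕ → Tm) (A W : Tm) :
    (applySub (upSub σ) A).subst 0 W = applySub (consSub W σ) A := by
  rw [subst0_eq, applySub_applySub]
  refine applySub_ext (fun n => ?_) A
  cases n with
  | zero => simp [upSub, applySub, consSub]
  | succ n =>
      simp only [upSub, consSub, applySub_rename]
      exact applySub_var _

theorem applySub_subst0 (σ : ℕ → Tm) (A B : Tm) :
    applySub σ (A.subst 0 B) = (applySub (upSub σ) A).subst 0 (applySub σ B) := by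
  rw [subst0_up, subst0_eq, applySub_applySub]
  refine applySub_ext (fun n => ?_) A
  cases n with
  | zero => simp [sSub, consSub]
  | succ n => simp [sSub, consSub, applySub]

end Tm

/-! ### Parallel βv-reduction -/

theorem value_rename {V : Tm} (h : IsValue V) (r : ℕ → ℕ) : IsValue (Tm.rename r V) := by
  cases h with
  | var n => exact .var _
  | lam M => exact .lam _

theorem value_applySub {V : Tm} (h : IsValue V) {σ} (hv : ∀ n, IsValue (σ n)) :
    IsValue (Tm.applySub σ V) := by
  cases h with
  | var n => exact hv n
  | lam M => exact .lam _

inductive Pv : Tm → Tm → Prop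
  | var (n) : Pv (Tm.var n) (Tm.var n)
  | lam {A A'} : Pv A A' → Pv (Tm.lam A) (Tm.lam A')
  | app {A A' B B'} : Pv A A' → Pv B B' → Pv (Tm.app A B) (Tm.app A' B')
  | beta {A A' B B'} : IsValue B → Pv A A' → Pv B B' →
      Pv (Tm.app (Tm.lam A) B) (A'.subst 0 B')

theorem Pv.rfl : ∀ M, Pv M M
  | .var n => .var n
  | .lam M => .lam (Pv.rfl M)
  | .app M N => .app (Pv.rfl M) (Pv.rfl N)

theorem pv_value {B B'} (v : IsValue B) (h : Pv B B') : IsValue B' := by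
  cases v with
  | var n => cases h; exact .var _
  | lam M => cases h with | lam h => exact .lam _

theorem pv_rename {M M'} (h : Pv M M') : ∀ r, Pv (Tm.rename r M) (Tm.rename r M') := by
  induction h with
  | var n => intro r; exact .var _
  | lam h ih => intro r; exact .lam (ih _)
  | app h1 h2 ih1 ih2 => intro r; exact .app (ih1 r) (ih2 r)
  | beta hv h1 h2 ih1 ih2 =>
      intro r
      rw [Tm.rename_subst0]
      exact Pv.beta (value_rename hv r) (ih1 _) (ih2 r)

theorem up_pv {σ σ' : ℕ → Tm} (hp : ∀ n, Pv (σ n) (σ' n)) :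
    ∀ n, Pv (Tm.upSub σ n) (Tm.upSub σ' n)
  | 0 => .var 0
  | n+1 => pv_rename (hp n) _

theorem up_val {σ : ℕ → Tm} (hv : ∀ n, IsValue (σ n)) : ∀ n, IsValue (Tm.upSub σ n)
  | 0 => .var 0
  | n+1 => value_rename (hv n) _

theorem pv_applySub {M M'} (h : Pv M M') :
    ∀ σ σ', (∀ n, Pv (σ n) (σ' n)) → (∀ n, IsValue (σ n)) → (∀ n, IsValue (σ' n)) →
    Pv (Tm.applySub σ M) (Tm.applySub σ' M') := by
  induction h with
  | var n => intro σ σ' hp hv hv'; exact hp n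
  | lam h ih =>
      intro σ σ' hp hv hv'
      exact .lam (ih _ _ (up_pv hp) (up_val hv) (up_val hv'))
  | app h1 h2 ih1 ih2 =>
      intro σ σ' hp hv hv'
      exact .app (ih1 _ _ hp hv hv') (ih2 _ _ hp hv hv')
  | beta hb h1 h2 ih1 ih2 =>
      intro σ σ' hp hv hv'
      rw [Tm.applySub_subst0]
      exact Pv.beta (value_applySub hb hv) (ih1 _ _ (up_pv hp) (up_val hv) (up_val hv'))
        (ih2 _ _ hp hv hv')

theorem pv_subst0 {A A' B B'} (h : Pv A A') (hb : Pv B B') (v : IsValue B) (v' : IsValue B') :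
    Pv (A.subst 0 B) (A'.subst 0 B') := by
  rw [Tm.subst0_eq, Tm.subst0_eq]
  exact pv_applySub h _ _
    (fun n => by cases n with | zero => exact hb | succ n => exact .var n)
    (fun n => by cases n with | zero => exact v | succ n => exact .var n)
    (fun n => by cases n with | zero => exact v' | succ n => exact .var n)

theorem betav_pv {M N} (h : Betav M N) : Pv M N := by
  induction h with
  | beta hv => exact Pv.beta hv (Pv.rfl _) (Pv.rfl _)
  | lam _ ih => exact .lam ih
  | appL _ ih => exact .app ih (Pv.rfl _)
  | appR _ ih => exact .app (Pv.rfl _) ih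

theorem rtg_betav_lam {A A'} (h : Relation.ReflTransGen Betav A A') :
    Relation.ReflTransGen Betav (Tm.lam A) (Tm.lam A') :=
  Relation.ReflTransGen.lift Tm.lam (fun _ _ h => Betav.lam h) _ _ h

theorem rtg_betav_appL {A A' B} (h : Relation.ReflTransGen Betav A A') :
    Relation.ReflTransGen Betav (Tm.app A B) (Tm.app A' B) :=
  Relation.ReflTransGen.lift (fun X => Tm.app X B) (fun _ _ h => Betav.appL h) _ _ h

theorem rtg_betav_appR {A B B'} (h : Relation.ReflTransGen Betav B B') :
    Relation.ReflTransGen Betav (Tm.app A B) (Tm.app A B') :=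
  Relation.ReflTransGen.lift (fun X => Tm.app A X) (fun _ _ h => Betav.appR h) _ _ h

theorem pv_betastar {M N} (h : Pv M N) : Relation.ReflTransGen Betav M N := by
  induction h with
  | var n => exact .refl
  | lam _ ih => exact rtg_betav_lam ih
  | app _ _ ih1 ih2 => exact (rtg_betav_appL ih1).trans (rtg_betav_appR ih2)
  | beta hv h1 h2 ih1 ih2 =>
      exact ((rtg_betav_appL (rtg_betav_lam ih1)).trans (rtg_betav_appR ih2)).trans
        (Relation.ReflTransGen.single (Betav.beta (pv_value hv h2)))

theorem rtg_pv_of_betastar {M N} (h : Relation.ReflTransGen Betav M N) :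
    Relation.ReflTransGen Pv M N := Relation.ReflTransGen.mono (fun _ _ => betav_pv) _ _ h

theorem rtg_betastar_of_pv {M N} (h : Relation.ReflTransGen Pv M N) :
    Relation.ReflTransGen Betav M N := by
  induction h with
  | refl => exact .refl
  | tail _ h2 ih => exact ih.trans (pv_betastar h2)

/-! ### Internal parallel steps, merge / split / factorization -/

theorem value_no_weak {V s : Tm} (h : IsValue V) : ¬ Weakv V s := by
  cases h <;> intro hw <;> cases hw

theorem lam_no_weak {A s : Tm} : ¬ Weakv (Tm.lam A) s := fun h => by cases h

inductive Intp : Tm → Tm → Prop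
  | var (n) : Intp (Tm.var n) (Tm.var n)
  | lam {A A'} : Pv A A' → Intp (Tm.lam A) (Tm.lam A')
  | app {A A' B B'} : Intp A A' → Intp B B' → Intp (Tm.app A B) (Tm.app A' B')

theorem Intp.rfl : ∀ M, Intp M M
  | .var n => .var n
  | .lam M => .lam (Pv.rfl M)
  | .app M N => .app (Intp.rfl M) (Intp.rfl N)

theorem intp_pv {M N} (h : Intp M N) : Pv M N := by
  induction h with
  | var n => exact .var n
  | lam h => exact .lam h
  | app _ _ ih1 ih2 => exact .app ih1 ih2

theorem intp_value_rev {B V'} (h : Intp B V') (v : IsValue V') : IsValue B ∧ Pv B V' := by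
  cases h with
  | var n => exact ⟨.var n, .var n⟩
  | lam h => exact ⟨.lam _, .lam h⟩
  | app h1 h2 => cases v

theorem merge {M Q R} (hi : Intp M Q) (hw : Weakv Q R) : Pv M R := by
  induction hw generalizing M with
  | beta hv =>
      cases hi with
      | app h1 h2 =>
          cases h1 with
          | lam hC =>
              obtain ⟨hBv, hBpv⟩ := intp_value_rev h2 hv
              exact Pv.beta hBv hC hBpv
  | appL h ih =>
      cases hi with
      | app h1 h2 => exact .app (ih h1) (intp_pv h2)
  | appR h ih =>
      cases hi with
      | app h1 h2 => exact .app (intp_pv h1) (ih h2)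

theorem rtg_weak_appL {A A' B} (h : Relation.ReflTransGen Weakv A A') :
    Relation.ReflTransGen Weakv (Tm.app A B) (Tm.app A' B) :=
  Relation.ReflTransGen.lift (fun X => Tm.app X B) (fun _ _ h => Weakv.appL h) _ _ h

theorem rtg_weak_appR {A B B'} (h : Relation.ReflTransGen Weakv B B') :
    Relation.ReflTransGen Weakv (Tm.app A B) (Tm.app A B') :=
  Relation.ReflTransGen.lift (fun X => Tm.app A X) (fun _ _ h => Weakv.appR h) _ _ h

theorem intp_of_pv_value {V V'} (hv : IsValue V) (h : Pv V V') : Intp V V' := by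
  cases h with
  | var n => exact .var n
  | lam hA => exact .lam hA
  | app h1 h2 => cases hv
  | beta hb h1 h2 => cases hv

theorem split_sub {C C'} (h : Pv C C') :
    ∀ σ σ', (∀ n, Pv (σ n) (σ' n)) → (∀ n, IsValue (σ n)) → (∀ n, IsValue (σ' n)) →
    ∃ P, Relation.ReflTransGen Weakv (Tm.applySub σ C) P ∧ Intp P (Tm.applySub σ' C') := by
  induction h with
  | var n =>
      intro σ σ' hp hv hv'
      exact ⟨σ n, .refl, intp_of_pv_value (hv n) (hp n)⟩
  | lam h ih =>
      intro σ σ' hp hv hv'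
      exact ⟨_, .refl, .lam (pv_applySub h _ _ (up_pv hp) (up_val hv) (up_val hv'))⟩
  | app h1 h2 ih1 ih2 =>
      intro σ σ' hp hv hv'
      obtain ⟨P1, w1, i1⟩ := ih1 σ σ' hp hv hv'
      obtain ⟨P2, w2, i2⟩ := ih2 σ σ' hp hv hv'
      exact ⟨.app P1 P2, (rtg_weak_appL w1).trans (rtg_weak_appR w2), .app i1 i2⟩
  | beta hb h1 h2 ih1 ih2 =>
      intro σ σ' hp hv hv'
      obtain ⟨P, w, i⟩ := ih1 (Tm.consSub (Tm.applySub σ _) σ)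
        (Tm.consSub (Tm.applySub σ' _) σ')
        (fun n => by cases n with
          | zero => exact pv_applySub h2 σ σ' hp hv hv'
          | succ n => exact hp n)
        (fun n => by cases n with
          | zero => exact value_applySub hb hv
          | succ n => exact hv n)
        (fun n => by cases n with
          | zero => exact value_applySub (pv_value hb h2) hv'
          | succ n => exact hv' n)
      refine ⟨P, ?_, ?_⟩
      · refine Relation.ReflTransGen.head (Weakv.beta (value_applySub hb hv)) ?_
        rw [Tm.subst0_up]; exact w
      · rw [Tm.applySub_subst0, Tm.subst0_up]; exact i

theorem split {M N} (h : Pv M N) :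
    ∃ P, Relation.ReflTransGen Weakv M P ∧ Intp P N := by
  have := split_sub h Tm.var Tm.var (fun n => .var n) (fun n => .var n) (fun n => .var n)
  rwa [Tm.applySub_var, Tm.applySub_var] at this

theorem intp_weakstar {Y Z} (h : Relation.ReflTransGen Weakv Y Z) :
    ∀ {X}, Intp X Y → ∃ X', Relation.ReflTransGen Weakv X X' ∧ Intp X' Z := by
  induction h using Relation.ReflTransGen.head_induction_on with
  | refl => exact fun hi => ⟨_, .refl, hi⟩
  | head hst _ ih =>
      intro X hXY
      obtain ⟨P, hw, hint⟩ := split (merge hXY hst)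
      obtain ⟨X', h1, h2⟩ := ih hint
      exact ⟨X', hw.trans h1, h2⟩

theorem factor {M N} (h : Relation.ReflTransGen Pv M N) :
    ∃ P, Relation.ReflTransGen Weakv M P ∧ Relation.ReflTransGen Intp P N := by
  induction h using Relation.ReflTransGen.head_induction_on with
  | refl => exact ⟨_, .refl, .refl⟩
  | head hst _ ih =>
      obtain ⟨Q, wQ, iQ⟩ := ih
      obtain ⟨P₀, w₀, i₀⟩ := split hst
      obtain ⟨Q', w', i'⟩ := intp_weakstar wQ i₀
      exact ⟨Q', w₀.trans w', .head i' iQ⟩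

/-! ### Weak-normal forms and the diamond property of the unbiased strategy -/

def WN (M : Tm) : Prop := ∀ s, ¬ Weakv M s

theorem wn_lam {A : Tm} : WN (Tm.lam A) := fun _ h => by cases h

theorem wn_app_intro {A B : Tm} (hA : WN A) (hB : WN B)
    (hr : ∀ C, A = Tm.lam C → ¬ IsValue B) : WN (Tm.app A B) := by
  intro s hs
  cases hs with
  | beta hv => exact hr _ rfl hv
  | appL h => exact hA _ h
  | appR h => exact hB _ h

theorem wn_app_elim {A B : Tm} (h : WN (Tm.app A B)) :
    WN A ∧ WN B ∧ (∀ C, A = Tm.lam C → ¬ IsValue B) := by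
  refine ⟨fun s hs => h _ (.appL hs), fun s hs => h _ (.appR hs), fun C hC hv => ?_⟩
  subst hC
  exact h _ (.beta hv)

theorem weakv_betav {M N} (h : Weakv M N) : Betav M N := by
  induction h with
  | beta hv => exact .beta hv
  | appL _ ih => exact .appL ih
  | appR _ ih => exact .appR ih

theorem unbv_betav {M N} (h : UnbV M N) : Betav M N := by
  induction h with
  | weak hw => exact weakv_betav hw
  | lam _ _ ih => exact .lam ih
  | appL _ _ ih => exact .appL ih
  | appR _ _ ih => exact .appR ih

theorem unbv_wn_cases {M M'} (h : UnbV M M') (wn : WN M) :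
    (∃ A A', M = Tm.lam A ∧ M' = Tm.lam A' ∧ UnbV A A') ∨
    (∃ A B A', M = Tm.app A B ∧ M' = Tm.app A' B ∧ UnbV A A') ∨
    (∃ A B B', M = Tm.app A B ∧ M' = Tm.app A B' ∧ UnbV B B') := by
  cases h with
  | weak hw => exact absurd hw (wn _)
  | lam _ h => exact .inl ⟨_, _, rfl, rfl, h⟩
  | appL _ h => exact .inr (.inl ⟨_, _, _, rfl, rfl, h⟩)
  | appR _ h => exact .inr (.inr ⟨_, _, _, rfl, rfl, h⟩)

theorem unbv_lam_iff {Q Q'} (h : UnbV Q Q') (wn : WN Q) :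
    (∃ C, Q' = Tm.lam C) ↔ (∃ C, Q = Tm.lam C) := by
  rcases unbv_wn_cases h wn with ⟨A, A', h1, h2, _⟩ | ⟨A, B, A', h1, h2, _⟩ |
    ⟨A, B, B', h1, h2, _⟩ <;> subst h1 <;> subst h2 <;> simp

theorem unbv_value_iff {Q Q'} (h : UnbV Q Q') (wn : WN Q) :
    IsValue Q' ↔ IsValue Q := by
  rcases unbv_wn_cases h wn with ⟨A, A', h1, h2, _⟩ | ⟨A, B, A', h1, h2, _⟩ |
    ⟨A, B, B', h1, h2, _⟩ <;> subst h1 <;> subst h2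
  · exact ⟨fun _ => .lam _, fun _ => .lam _⟩
  · exact iff_of_false (fun hv => by cases hv) (fun hv => by cases hv)
  · exact iff_of_false (fun hv => by cases hv) (fun hv => by cases hv)

theorem unbv_wn {M M'} (h : UnbV M M') (wn : WN M) : WN M' := by
  induction h with
  | weak hw => exact absurd hw (wn _)
  | lam _ _ _ => exact wn_lam
  | appL hc h ih =>
      obtain ⟨wA, wB, hr⟩ := wn_app_elim hc
      refine wn_app_intro (ih wA) wB (fun C hC hv => ?_)
      obtain ⟨C₀, hP⟩ := (unbv_lam_iff h wA).mp ⟨C, hC⟩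
      exact hr C₀ hP hv
  | appR hc h ih =>
      obtain ⟨wA, wB, hr⟩ := wn_app_elim hc
      refine wn_app_intro wA (ih wB) (fun C hC hv => ?_)
      exact hr C hC ((unbv_value_iff h wB).mp hv)

theorem wn_app_left_step {A A' B} (h : UnbV A A') (wn : WN (Tm.app A B)) :
    WN (Tm.app A' B) := by
  obtain ⟨wA, wB, hr⟩ := wn_app_elim wn
  refine wn_app_intro (unbv_wn h wA) wB (fun C hC hv => ?_)
  obtain ⟨C₀, hP⟩ := (unbv_lam_iff h wA).mp ⟨C, hC⟩
  exact hr C₀ hP hv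

theorem wn_app_right_step {A B B'} (h : UnbV B B') (wn : WN (Tm.app A B)) :
    WN (Tm.app A B') := by
  obtain ⟨wA, wB, hr⟩ := wn_app_elim wn
  refine wn_app_intro wA (unbv_wn h wB) (fun C hC hv => ?_)
  exact hr C hC ((unbv_value_iff h wB).mp hv)

theorem weak_diamond {M P Q} (h1 : Weakv M P) (h2 : Weakv M Q) :
    P = Q ∨ ∃ R, Weakv P R ∧ Weakv Q R := by
  induction h1 generalizing Q with
  | beta hv =>
      cases h2 with
      | beta hv2 => exact .inl rfl
      | appL h => exact absurd h lam_no_weak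
      | appR h => exact absurd h (value_no_weak hv)
  | appL h ih =>
      cases h2 with
      | beta hv2 => exact absurd h lam_no_weak
      | appL h2 =>
          rcases ih h2 with rfl | ⟨R, r1, r2⟩
          · exact .inl rfl
          · exact .inr ⟨_, .appL r1, .appL r2⟩
      | appR h2 => exact .inr ⟨_, .appR h2, .appL h⟩
  | appR h ih =>
      cases h2 with
      | beta hv2 => exact absurd h (value_no_weak hv2)
      | appL h2 => exact .inr ⟨_, .appL h2, .appR h⟩
      | appR h2 =>
          rcases ih h2 with rfl | ⟨R, r1, r2⟩
          · exact .inl rfl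
          · exact .inr ⟨_, .appR r1, .appR r2⟩

theorem unbv_diamond {M P Q} (h1 : UnbV M P) (h2 : UnbV M Q) :
    P = Q ∨ ∃ R, UnbV P R ∧ UnbV Q R := by
  induction h1 generalizing Q with
  | weak hw =>
      cases h2 with
      | weak hw2 =>
          rcases weak_diamond hw hw2 with rfl | ⟨R, r1, r2⟩
          · exact .inl rfl
          · exact .inr ⟨R, .weak r1, .weak r2⟩
      | lam hc _ => exact absurd hw (hc _)
      | appL hc _ => exact absurd hw (hc _)
      | appR hc _ => exact absurd hw (hc _)
  | lam hc h ih =>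
      cases h2 with
      | weak hw => exact absurd hw (hc _)
      | lam _ h2 =>
          rcases ih h2 with rfl | ⟨R, r1, r2⟩
          · exact .inl rfl
          · exact .inr ⟨_, .lam (fun _ => lam_no_weak) r1, .lam (fun _ => lam_no_weak) r2⟩
  | appL hc h ih =>
      cases h2 with
      | weak hw => exact absurd hw (hc _)
      | appL _ h2 =>
          rcases ih h2 with rfl | ⟨R, r1, r2⟩
          · exact .inl rfl
          · exact .inr ⟨_, .appL (wn_app_left_step h hc) r1, .appL (wn_app_left_step h2 hc) r2⟩
      | appR _ h2 =>
          exact .inr ⟨_, .appR (wn_app_left_step h hc) h2, .appL (wn_app_right_step h2 hc) h⟩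
  | appR hc h ih =>
      cases h2 with
      | weak hw => exact absurd hw (hc _)
      | appL _ h2 =>
          exact .inr ⟨_, .appL (wn_app_right_step h hc) h2, .appR (wn_app_left_step h2 hc) h⟩
      | appR _ h2 =>
          rcases ih h2 with rfl | ⟨R, r1, r2⟩
          · exact .inl rfl
          · exact .inr ⟨_, .appR (wn_app_right_step h hc) r1, .appR (wn_app_right_step h2 hc) r2⟩

theorem betav_unbv_step {M N} (h : Betav M N) : ∃ M', UnbV M M' := by
  induction h with
  | beta hv => exact ⟨_, .weak (.beta hv)⟩
  | lam h ih =>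
      obtain ⟨P', hP⟩ := ih
      exact ⟨_, .lam (fun _ => lam_no_weak) hP⟩
  | appL h ih =>
      rename_i A A' B
      rcases Classical.em (∃ s, Weakv (Tm.app A B) s) with ⟨s, hs⟩ | hn
      · exact ⟨s, .weak hs⟩
      · obtain ⟨A₁, hA⟩ := ih
        exact ⟨_, .appL (fun s hs => hn ⟨s, hs⟩) hA⟩
  | appR h ih =>
      rename_i A B B'
      rcases Classical.em (∃ s, Weakv (Tm.app A B) s) with ⟨s, hs⟩ | hn
      · exact ⟨s, .weak hs⟩
      · obtain ⟨B₁, hB⟩ := ih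
        exact ⟨_, .appR (fun s hs => hn ⟨s, hs⟩) hB⟩

/-! ### Completeness: the unbiased strategy reaches the normal form -/

def Tm.size : Tm → ℕ
  | .var _ => 1
  | .lam M => M.size + 1
  | .app M N => M.size + N.size + 1

theorem wn_var {n : ℕ} : WN (Tm.var n) := fun _ h => by cases h

theorem intp_value_fwd {B B'} (v : IsValue B) (h : Intp B B') : IsValue B' := by
  cases v with
  | var n => cases h; exact .var _
  | lam M => cases h; exact .lam _

theorem intp_wn {X Y} (h : Intp X Y) (wn : WN Y) : WN X := by
  induction h with
  | var n => exact wn_var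
  | lam _ => exact wn_lam
  | app h1 h2 ih1 ih2 =>
      obtain ⟨wA, wB, hr⟩ := wn_app_elim wn
      refine wn_app_intro (ih1 wA) (ih2 wB) (fun C hC hv => ?_)
      subst hC
      cases h1 with
      | lam hA => exact hr _ rfl (intp_value_fwd hv h2)

theorem intp_star_wn {P N} (h : Relation.ReflTransGen Intp P N) (wn : WN N) : WN P := by
  induction h using Relation.ReflTransGen.head_induction_on with
  | refl => exact wn
  | head hst _ ih => exact intp_wn hst ih

theorem intp_star_var {P T} (h : Relation.ReflTransGen Intp P T) :
    ∀ {n}, T = Tm.var n → P = Tm.var n := by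
  induction h with
  | refl => exact fun hT => hT
  | tail h1 h2 ih =>
      intro n hT; subst hT
      cases h2 with
      | var m => exact ih rfl

theorem intp_star_lam {P T} (h : Relation.ReflTransGen Intp P T) :
    ∀ {A₀}, T = Tm.lam A₀ → ∃ A, P = Tm.lam A ∧ Relation.ReflTransGen Pv A A₀ := by
  induction h with
  | refl => exact fun hT => ⟨_, hT, .refl⟩
  | tail h1 h2 ih =>
      intro A₀ hT; subst hT
      cases h2 with
      | lam hA =>
          obtain ⟨A, rfl, iA⟩ := ih rfl
          exact ⟨A, rfl, iA.tail hA⟩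

theorem intp_star_app {P T} (h : Relation.ReflTransGen Intp P T) :
    ∀ {A₀ B₀}, T = Tm.app A₀ B₀ → ∃ A B, P = Tm.app A B ∧
      Relation.ReflTransGen Intp A A₀ ∧ Relation.ReflTransGen Intp B B₀ := by
  induction h with
  | refl => exact fun hT => ⟨_, _, hT, .refl, .refl⟩
  | tail h1 h2 ih =>
      intro A₀ B₀ hT; subst hT
      cases h2 with
      | app hA hB =>
          obtain ⟨A, B, rfl, iA, iB⟩ := ih rfl
          exact ⟨A, B, rfl, iA.tail hA, iB.tail hB⟩

theorem intp_star_betastar {X Y} (h : Relation.ReflTransGen Intp X Y) :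
    Relation.ReflTransGen Betav X Y :=
  rtg_betastar_of_pv (Relation.ReflTransGen.mono (fun _ _ h => intp_pv h) _ _ h)

theorem wn_of_normal {N} (h : NormalElt Betav N) : WN N := fun s hs => h s (weakv_betav hs)

theorem normal_lam {A} (h : NormalElt Betav (Tm.lam A)) : NormalElt Betav A :=
  fun s hs => h _ (.lam hs)

theorem normal_appL {A B} (h : NormalElt Betav (Tm.app A B)) : NormalElt Betav A :=
  fun s hs => h _ (.appL hs)

theorem normal_appR {A B} (h : NormalElt Betav (Tm.app A B)) : NormalElt Betav B :=
  fun s hs => h _ (.appR hs)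

theorem ustar_lam {A A₀} (h : Relation.ReflTransGen UnbV A A₀) :
    Relation.ReflTransGen UnbV (Tm.lam A) (Tm.lam A₀) :=
  Relation.ReflTransGen.lift Tm.lam (fun _ _ h => UnbV.lam (fun _ => lam_no_weak) h) _ _ h

theorem ustar_wn {X Y} (h : Relation.ReflTransGen UnbV X Y) (wn : WN X) : WN Y := by
  induction h with
  | refl => exact wn
  | tail _ h2 ih => exact unbv_wn h2 ih

theorem ustar_appL {A A₀ B} (h : Relation.ReflTransGen UnbV A A₀) :
    WN (Tm.app A B) → Relation.ReflTransGen UnbV (Tm.app A B) (Tm.app A₀ B) := by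
  induction h using Relation.ReflTransGen.head_induction_on with
  | refl => exact fun _ => .refl
  | head hst _ ih =>
      intro wn
      exact .head (.appL (fun s hs => wn s hs) hst) (ih (wn_app_left_step hst wn))

theorem ustar_appR {A B B₀} (h : Relation.ReflTransGen UnbV B B₀) :
    WN (Tm.app A B) → Relation.ReflTransGen UnbV (Tm.app A B) (Tm.app A B₀) := by
  induction h using Relation.ReflTransGen.head_induction_on with
  | refl => exact fun _ => .refl
  | head hst _ ih =>
      intro wn
      exact .head (.appR (fun s hs => wn s hs) hst) (ih (wn_app_right_step hst wn))

theorem size_pos (M : Tm) : 0 < M.size := by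
  cases M <;> simp [Tm.size]

theorem complete_aux : ∀ (k : ℕ) (N : Tm), N.size ≤ k → NormalElt Betav N →
    ∀ M, Relation.ReflTransGen Betav M N → Relation.ReflTransGen UnbV M N := by
  intro k
  induction k with
  | zero =>
      intro N hk
      exact absurd hk (by simpa using (size_pos N).not_ge)
  | succ k ih =>
      intro N hk hN M hMN
      obtain ⟨P, hw, hi⟩ := factor (rtg_pv_of_betastar hMN)
      have hMP : Relation.ReflTransGen UnbV M P := Relation.ReflTransGen.mono (fun _ _ h => UnbV.weak h) _ _ hw
      cases N with
      | var n =>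
          rw [intp_star_var hi rfl] at hMP
          exact hMP
      | lam A₀ =>
          obtain ⟨A, rfl, hA⟩ := intp_star_lam hi rfl
          have hstep : Relation.ReflTransGen UnbV A A₀ :=
            ih A₀ (by simpa [Tm.size] using hk) (normal_lam hN) A (rtg_betastar_of_pv hA)
          exact hMP.trans (ustar_lam hstep)
      | app A₀ B₀ =>
          have wnN : WN (Tm.app A₀ B₀) := wn_of_normal hN
          have wnP := intp_star_wn hi wnN
          obtain ⟨A, B, rfl, hA, hB⟩ := intp_star_app hi rfl
          have sA : A₀.size ≤ k := by simp [Tm.size] at hk; omega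
          have sB : B₀.size ≤ k := by
            simp [Tm.size] at hk
            have := size_pos A₀
            omega
          have hstepA : Relation.ReflTransGen UnbV A A₀ :=
            ih A₀ sA (normal_appL hN) A (intp_star_betastar hA)
          have hstepB : Relation.ReflTransGen UnbV B B₀ :=
            ih B₀ sB (normal_appR hN) B (intp_star_betastar hB)
          have c1 : Relation.ReflTransGen UnbV (Tm.app A B) (Tm.app A₀ B) :=
            ustar_appL hstepA wnP
          have c2 : Relation.ReflTransGen UnbV (Tm.app A₀ B) (Tm.app A₀ B₀) :=
            ustar_appR hstepB (ustar_wn c1 wnP)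
          exact (hMP.trans c1).trans c2

theorem complete {M N} (hN : NormalElt Betav N) (h : Relation.ReflTransGen Betav M N) :
    Relation.ReflTransGen UnbV M N :=
  complete_aux N.size N le_rfl hN M h

/-! ### Random descent and the main theorem -/

def StepsN : ℕ → Tm → Tm → Prop
  | 0, a, b => a = b
  | n+1, a, b => ∃ c, UnbV a c ∧ StepsN n c b

theorem rtg_stepsN {M N} (h : Relation.ReflTransGen UnbV M N) : ∃ k, StepsN k M N := by
  induction h using Relation.ReflTransGen.head_induction_on with
  | refl => exact ⟨0, rfl⟩
  | head hst _ ih =>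
      obtain ⟨k, hk⟩ := ih
      exact ⟨k+1, _, hst, hk⟩

theorem descent : ∀ (k) {M M' N}, StepsN k M N → NormalElt UnbV N → UnbV M M' →
    ∃ k', k' < k ∧ StepsN k' M' N := by
  intro k
  induction k with
  | zero =>
      intro M M' N h hN hs
      obtain rfl : M = N := h
      exact absurd hs (hN M')
  | succ k ih =>
      intro M M' N h hN hs
      obtain ⟨C, hC, hrest⟩ := h
      rcases unbv_diamond hs hC with rfl | ⟨R, r1, r2⟩
      · exact ⟨k, Nat.lt_succ_self k, hrest⟩
      · obtain ⟨k', hk', hst⟩ := ih hrest hN r2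
        exact ⟨k'+1, Nat.succ_lt_succ hk', R, r1, hst⟩

theorem finish {N} : ∀ (k) {M}, StepsN k M N → NormalElt UnbV N →
    ∀ f, MaxSeq UnbV M f → ∃ n, f n = N := by
  intro k
  induction k using Nat.strong_induction_on with
  | _ k ih =>
      intro M h hN f hf
      rcases hf.2 0 with hstep | ⟨hnorm, _⟩
      · rw [hf.1] at hstep
        obtain ⟨k', hk', h'⟩ := descent k h hN hstep
        obtain ⟨n, hn⟩ := ih k' hk' h' hN (fun n => f (n+1)) ⟨rfl, fun n => hf.2 (n+1)⟩
        exact ⟨n+1, hn⟩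
      · rw [hf.1] at hnorm
        cases k with
        | zero => exact ⟨0, hf.1.trans h⟩
        | succ k =>
            obtain ⟨C, hC, _⟩ := h
            exact absurd hC (hnorm C)

/-- **Normalization theorem for Call-by-Value**: the unbiased strategy `⊳` is a
normalizing strategy for `→βv`.
(a) a term is `⊳`-normal iff it is βv-normal;
(b) if `M →βv* N` with `N` βv-normal, then every maximal `⊳`-sequence from `M` is
    finite and ends in a βv-normal form — indeed, by Random Descent, it ends in `N`. -/
theorem cbv_normalization :
    (∀ M : Tm, NormalElt UnbV M ↔ NormalElt Betav M) ∧
    (∀ M N : Tm, NormalElt Betav N → Relation.ReflTransGen Betav M N →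
      ∀ f : ℕ → Tm, MaxSeq UnbV M f → ∃ n, NormalElt UnbV (f n) ∧ f n = N) := by
  constructor
  · intro M
    constructor
    · intro hU s hs
      obtain ⟨M', hM'⟩ := betav_unbv_step hs
      exact hU M' hM'
    · intro hB s hs
      exact hB s (unbv_betav hs)
  · intro M N hN hMN f hf
    have hNu : NormalElt UnbV N := fun s hs => hN s (unbv_betav hs)
    obtain ⟨k, hk⟩ := rtg_stepsN (complete hN hMN)
    obtain ⟨n, hn⟩ := finish k hk hNu f hf
    exact ⟨n, by rw [hn]; exact hNu, hn⟩
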